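/- Let p: T → W be a birational morphism of smooth projective surfaces with total exceptional divisors E_1, ..., E_s. Let Δ, Δ' be distinct effective divisors contracted by p with K_T·Δ = K_T·Δ' = 0, Δ² = Δ'² = -2, and Δ·Δ' = 0. If Δ·E_j = 1 then Δ'·E_j = 0. -/
import Mathlib


/-- An abstract smooth complex projective surface: its group of divisors with
intersection pairing, canonical divisor, effective cone, irreducible curves,
arithmetic genus (satisfying adjunction), and cohomology dimensions
`h⁰(D, O_D)`, `h¹(D, O_D)`, `h⁰(D, ω_D)`. -/
structure Surface where
  Div : Type
  grp : AddCommGroup Div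
  inter : Div → Div → ℤ
  inter_comm : ∀ A B, inter A B = inter B A
  inter_add_left : ∀ A B C, inter (A + B) C = inter A C + inter B C
  K : Div
  Eff : Div → Prop
  eff_zero : Eff 0
  eff_add : ∀ {A B}, Eff A → Eff B → Eff (A + B)
  Irr : Div → Prop
  irr_curve : ∀ {A}, Irr A → Eff A ∧ A ≠ 0
  pa : Div → ℤ
  adjunction : ∀ D, 2 * pa D - 2 = inter K D + inter D D
  h0O : Div → ℕ
  h1O : Div → ℕ
  h0ω : Div → ℕ
  pa_def : ∀ D, (1 : ℤ) - pa D = (h0O D : ℤ) - (h1O D : ℤ)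
  serre : ∀ D, h0ω D = h1O D

attribute [instance] Surface.grp

/-- A curve is a nonzero effective divisor. -/
def Surface.Curve (S : Surface) (D : S.Div) : Prop := S.Eff D ∧ D ≠ 0

/-- `D` is 1-connected: it is a curve and every decomposition `D = A + B`
into curves satisfies `A·B ≥ 1`. -/
def Surface.OneConnected (S : Surface) (D : S.Div) : Prop :=
  S.Curve D ∧ ∀ A B : S.Div, S.Curve A → S.Curve B → A + B = D → 1 ≤ S.inter A B

/-- The data of a birational morphism `p : T → W` of smooth projective surfaces,
a composition of `s` blow-ups, recorded on the source surface `S = T`: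
the total exceptional divisors `E 1, …, E s` (total transforms of the exceptional
curves of the blow-ups), the pullback `pK = p*K_W` of the canonical divisor of `W`,
and the predicate `Exc` of being supported on the `p`-exceptional locus
(i.e. contracted by `p` to a finite set of points). -/
structure Blowdown (S : Surface) (s : ℕ) where
  E : Fin s → S.Div
  pK : S.Div
  Exc : S.Div → Prop
  exc_zero : Exc 0
  exc_sub : ∀ {A B}, Exc A → Exc B → Exc (A - B)
  exc_E : ∀ i, Exc (E i)
  exc_comp : ∀ {D Γ}, Exc D → S.Eff D → S.Irr Γ → S.Eff (D - Γ) → Exc Γ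
  E_curve : ∀ i, S.Curve (E i)
  K_eq : S.K = pK + ∑ i, E i
  pK_exc : ∀ {D}, Exc D → S.inter pK D = 0
  EE : ∀ i j, S.inter (E i) (E j) = if i = j then -1 else 0
  negdef : ∀ {D}, Exc D → D ≠ 0 → S.inter D D < 0
  exc_span : ∀ {D}, Exc D → (∀ i, S.inter D (E i) = 0) → D = 0

/-- if `Δ ≠ Δ'` are effective divisors contracted by `p` with
`K_T·Δ = K_T·Δ' = 0`, `Δ² = Δ'² = -2` and `Δ·Δ' = 0`, then `Δ·E_j = 1`
implies `Δ'·E_j = 0`. -/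
theorem stmt14 (S : Surface) (s : ℕ) (B : Blowdown S s) (Δ Δ' : S.Div)
    (hne : Δ ≠ Δ')
    (hΔ : S.Eff Δ) (hexc : B.Exc Δ) (hK : S.inter S.K Δ = 0)
    (hsq : S.inter Δ Δ = -2)
    (hΔ' : S.Eff Δ') (hexc' : B.Exc Δ') (hK' : S.inter S.K Δ' = 0)
    (hsq' : S.inter Δ' Δ' = -2)
    (horth : S.inter Δ Δ' = 0)
    (j : Fin s) (hj : S.inter Δ (B.E j) = 1) :
    S.inter Δ' (B.E j) = 0 := by
  classical
  -- basic bilinearity facts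
  have izl : ∀ A, S.inter 0 A = 0 := by
    intro A
    have h := S.inter_add_left 0 0 A
    simp only [add_zero] at h
    omega
  have iar : ∀ A B C, S.inter A (B + C) = S.inter A B + S.inter A C := by
    intro A B C
    rw [S.inter_comm, S.inter_add_left, S.inter_comm B, S.inter_comm C]
  have inl : ∀ A B, S.inter (-A) B = -(S.inter A B) := by
    intro A B
    have h := S.inter_add_left A (-A) B
    rw [add_neg_cancel, izl] at h
    omega
  have inr : ∀ A B, S.inter A (-B) = -(S.inter A B) := by
    intro A B; rw [S.inter_comm, inl, S.inter_comm]
  have exc_add : ∀ {A C}, B.Exc A → B.Exc C → B.Exc (A + C) := by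
    intro A C hA hC
    have h := B.exc_sub hA (B.exc_sub B.exc_zero hC)
    simpa [sub_neg_eq_add] using h
  have exc_neg : ∀ {A}, B.Exc A → B.Exc (-A) := by
    intro A hA
    have h := B.exc_sub B.exc_zero hA
    simpa using h
  set e := B.E j with he
  have hee : S.inter e e = -1 := by simpa using B.EE j j
  -- K · e = -1
  have hKe : S.inter S.K e = -1 := by
    rw [B.K_eq, S.inter_add_left, B.pK_exc (B.exc_E j)]
    have hsum : S.inter (∑ i, B.E i) e = ∑ i, S.inter (B.E i) e := by
      let f : S.Div →+ ℤ := AddMonoidHom.mk' (fun X => S.inter X e)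
        (fun A C => S.inter_add_left A C e)
      exact map_sum f B.E Finset.univ
    rw [hsum]
    have : ∀ i, S.inter (B.E i) e = if i = j then -1 else 0 := fun i => B.EE i j
    simp [this]
  set a := S.inter Δ' e with ha
  -- the divisors D and D'
  have hexcE := B.exc_E j
  have hexcD : B.Exc (e + e + Δ + Δ') :=
    exc_add (exc_add (exc_add hexcE hexcE) hexc) hexc'
  have hexcD' : B.Exc (e + e + Δ + -Δ') :=
    exc_add (exc_add (exc_add hexcE hexcE) hexc) (exc_neg hexc')
  -- K · D = -2, hence D ≠ 0; same for D'
  have hKD : S.inter S.K (e + e + Δ + Δ') = -2 := by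
    rw [iar, iar, iar, hKe, hK, hK']; ring
  have hKD' : S.inter S.K (e + e + Δ + -Δ') = -2 := by
    rw [iar, iar, iar, inr, hKe, hK, hK']; ring
  have hDne : (e + e + Δ + Δ') ≠ 0 := by
    intro h0
    rw [h0, S.inter_comm, izl] at hKD
    omega
  have hD'ne : (e + e + Δ + -Δ') ≠ 0 := by
    intro h0
    rw [h0, S.inter_comm, izl] at hKD'
    omega
  have hnegD := B.negdef hexcD hDne
  have hnegD' := B.negdef hexcD' hD'ne
  -- expand the self-intersections
  have heΔ : S.inter e Δ = 1 := by rw [S.inter_comm]; exact hj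
  have heΔ' : S.inter e Δ' = a := by rw [S.inter_comm]
  have hΔΔ' : S.inter Δ Δ' = 0 := horth
  have hΔ'Δ : S.inter Δ' Δ = 0 := by rw [S.inter_comm]; exact horth
  have hΔe : S.inter Δ e = 1 := hj
  have hexp : S.inter (e + e + Δ + Δ') (e + e + Δ + Δ') = 4 * a - 4 := by
    simp only [S.inter_add_left, iar, inl, inr, hee, heΔ, heΔ', hΔe, hsq,
      hΔΔ', hΔ'Δ, hsq']
    ring
  have hexp' : S.inter (e + e + Δ + -Δ') (e + e + Δ + -Δ') = -4 * a - 4 := by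
    simp only [S.inter_add_left, iar, inl, inr, hee, heΔ, heΔ', hΔe, hsq,
      hΔΔ', hΔ'Δ, hsq']
    ring
  rw [hexp] at hnegD
  rw [hexp'] at hnegD'
  omega
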